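/- Suppose κ = κ^{<κ} is uncountable, F ⊆ κ^κ has size κ⁺, and for each n < ω, E^n ⊆ κ is a club and h_n is a partial function from κ^{<κ} to κ^{<κ}, where H_f^n(α) := f↾β_n(α) with β_n(α) := min(⋂_{k<n} E^k \ (α+1)). If for every f ∈ F and every n < ω there is α_n^f such that h_n(f↾α) = H_f^n(α) for all α ∈ E^n with α ≥ α_n^f, then there exist distinct f, g ∈ F and an ordinal β with f↾β = g↾β and β strictly greater than max{α ∈ ⋂_n E^n : f↾α = g↾α}, which is impossible. Hence the club uniformization statement 'for every F-coloring H̄ there exist a club E ⊆ κ and h : κ^{<κ} → κ^{<κ} with (∀f ∈ F)(∃α_f < κ)(∀α ∈ E \ α_f)(h(f↾α) = H_f(α))' fails. -/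

import Mathlib

open Ordinal Set Cardinal

noncomputable section

/-- A "sequence" coded as (length, values padded by 0 off the domain). -/
abbrev OSeq : Type 1 := Ordinal × (Ordinal → Ordinal)

/-- The restriction `f↾α` of `f` to ordinals below `α`. -/
def restr (f : Ordinal → Ordinal) (α : Ordinal) : OSeq :=
  (α, fun β => if β < α then f β else 0)

/-- `E` is a club (closed unbounded) subset of (the ordinals below) `o`. -/
def IsClubOrd (o : Ordinal) (E : Set Ordinal) : Prop :=
  E ⊆ Set.Iio o ∧ (∀ S ⊆ E, S.Nonempty → sSup S < o → sSup S ∈ E) ∧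
    ∀ α < o, ∃ β ∈ E, α ≤ β

/-- `s` is a sequence of length `< κ` with values `< κ`. -/
def IsSeq (κ : Cardinal) (s : OSeq) : Prop :=
  s.1 < κ.ord ∧ (∀ β < s.1, s.2 β < κ.ord) ∧ ∀ β, ¬ β < s.1 → s.2 β = 0

/- ### auxiliary lemmas -/

section Helpers
variable {κ : Cardinal.{0}}

lemma csup_lt (hreg : κ.IsRegular) (hunc : ℵ₀ < κ) (f : ℕ → Ordinal.{0})
    (h : ∀ n, f n < κ.ord) : (⨆ n, f n) < κ.ord := by
  apply Cardinal.iSup_lt_ord_of_isRegular hreg _ h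
  simpa using hunc

lemma succ_lt' (hreg : κ.IsRegular) {a : Ordinal.{0}} (h : a < κ.ord) : a + 1 < κ.ord := by
  rw [Ordinal.add_one_eq_succ]
  exact (Cardinal.isSuccLimit_ord hreg.aleph0_le).succ_lt h

lemma isClub_iInter (hreg : κ.IsRegular) (hunc : ℵ₀ < κ) (E : ℕ → Set Ordinal.{0})
    (hE : ∀ n, IsClubOrd κ.ord (E n)) : IsClubOrd κ.ord (⋂ n, E n) := by
  classical
  refine ⟨fun x hx => (hE 0).1 (Set.mem_iInter.1 hx 0),
    fun S hS hne hlt => Set.mem_iInter.2 fun n => (hE n).2.1 S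
      (hS.trans (Set.iInter_subset _ n)) hne hlt, ?_⟩
  intro γ₀ hγ₀
  have hnext : ∀ (n : ℕ) (γ : Ordinal), γ < κ.ord → ∃ β, β ∈ E n ∧ γ ≤ β ∧ β < κ.ord := by
    intro n γ hγ
    obtain ⟨β, hβE, hβ⟩ := (hE n).2.2 γ hγ
    exact ⟨β, hβE, hβ, (hE n).1 hβE⟩
  set nxt : ℕ → ↥(Set.Iio κ.ord) → ↥(Set.Iio κ.ord) := fun n x =>
    ⟨(hnext n x.1 x.2).choose, (hnext n x.1 x.2).choose_spec.2.2⟩ with hnxt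
  have hnxtE : ∀ n x, (nxt n x).1 ∈ E n := fun n x => (hnext n x.1 x.2).choose_spec.1
  have hnxtle : ∀ n x, x.1 ≤ (nxt n x).1 := fun n x => (hnext n x.1 x.2).choose_spec.2.1
  set d : ℕ → ↥(Set.Iio κ.ord) := fun m => Nat.rec (⟨γ₀, hγ₀⟩ : ↥(Set.Iio κ.ord))
    (fun _ x => ⟨(⨆ n, (nxt n x).1) + 1,
      succ_lt' hreg (csup_lt hreg hunc _ (fun n => (nxt n x).2))⟩) m with hd
  have hdsucc : ∀ m, (d (m+1)).1 = (⨆ n, (nxt n (d m)).1) + 1 := fun m => rfl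
  set lam : Ordinal := ⨆ m, (d m).1 with hlam
  have hlamlt : lam < κ.ord := csup_lt hreg hunc _ (fun m => (d m).2)
  have hdle : ∀ m, (d m).1 ≤ lam := fun m => le_ciSup (Ordinal.bddAbove_range _) m
  refine ⟨lam, Set.mem_iInter.2 fun n => ?_, (hdle 0)⟩
  have hsup : sSup (Set.range fun m => (nxt n (d m)).1) = lam := by
    apply le_antisymm
    · apply csSup_le (Set.range_nonempty _)
      rintro x ⟨m, rfl⟩
      calc (nxt n (d m)).1 ≤ ⨆ k, (nxt k (d m)).1 := le_ciSup (Ordinal.bddAbove_range _) n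
        _ ≤ (d (m+1)).1 := by rw [hdsucc]; exact le_of_lt (lt_add_one _)
        _ ≤ lam := hdle (m+1)
    · apply ciSup_le
      intro m
      exact le_trans (hnxtle n (d m)) (le_csSup (Ordinal.bddAbove_range _) ⟨m, rfl⟩)
  have := (hE n).2.1 (Set.range fun m => (nxt n (d m)).1)
    (by rintro x ⟨m, rfl⟩; exact hnxtE n (d m)) (Set.range_nonempty _)
    (by rw [hsup]; exact hlamlt)
  rwa [hsup] at this

lemma restr_eq_of {f g : Ordinal → Ordinal} {α : Ordinal} (h : ∀ β < α, f β = g β) :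
    restr f α = restr g α := by
  unfold restr
  refine Prod.ext rfl ?_
  funext β
  show (if β < α then f β else 0) = (if β < α then g β else 0)
  by_cases hβ : β < α
  · rw [if_pos hβ, if_pos hβ, h β hβ]
  · rw [if_neg hβ, if_neg hβ]

lemma eq_of_restr_eq {f g : Ordinal → Ordinal} {α : Ordinal} (h : restr f α = restr g α) :
    ∀ β < α, f β = g β := by
  intro β hβ
  have := congrFun (congrArg Prod.snd h) β
  simpa [restr, if_pos hβ] using this

/-- the recursive construction of the clubs/functions for part (2). -/
def buildSeq (pick : ℕ → (ℕ → Set Ordinal.{0}) → Set Ordinal.{0} × (OSeq → OSeq)) :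
    ℕ → ℕ → Set Ordinal.{0} × (OSeq → OSeq)
  | 0 => fun _ => (∅, fun _ => (0, fun _ => 0))
  | (m+1) => fun k => if k = m then pick m (fun j => (buildSeq pick m j).1)
      else buildSeq pick m k

lemma buildSeq_stab (pick : ℕ → (ℕ → Set Ordinal.{0}) → Set Ordinal.{0} × (OSeq → OSeq)) :
    ∀ n k, k < n → buildSeq pick n k = buildSeq pick (k+1) k := by
  intro n
  induction n with
  | zero => exact fun k hk => absurd hk (Nat.not_lt_zero k)
  | succ m ih =>
    intro k hk
    rcases Nat.lt_succ_iff_lt_or_eq.1 hk with h | h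
    · show (if k = m then pick m (fun j => (buildSeq pick m j).1) else buildSeq pick m k)
          = buildSeq pick (k+1) k
      rw [if_neg (show ¬ k = m by omega)]
      exact ih k h
    · subst h; rfl

end Helpers

lemma part1_aux (κ : Cardinal) (hreg : κ.IsRegular) (hunc : ℵ₀ < κ)
    (hpow : κ ^< κ = κ)
    (F : Set (Ordinal → Ordinal))
    (hF : #F = Cardinal.lift.{1,0} (Order.succ κ))
    (hFrange : ∀ f ∈ F, ∀ β < κ.ord, f β < κ.ord)
    (hFsep : ∀ f ∈ F, ∀ g ∈ F, f ≠ g → ∃ β < κ.ord, f β ≠ g β)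
    (E' : ℕ → Set Ordinal) (hclubs : ∀ n, IsClubOrd κ.ord (E' n))
    (h : ℕ → OSeq → Option OSeq)
    (hyp : ∀ f ∈ F, ∀ n : ℕ, ∃ a < κ.ord, ∀ α ∈ E' n, a ≤ α →
        h n (restr f α) = some (restr f (sInf {β | α < β ∧ ∀ k < n, β ∈ E' k}))) :
    False := by
  classical
  choose a ha hr using hyp
  set E : Set Ordinal := ⋂ n, E' n with hEdef
  have hEclub : IsClubOrd κ.ord E := isClub_iInter hreg hunc E' hclubs
  -- single step of propagation
  have step : ∀ f (hf : f ∈ F) g (hg : g ∈ F) (α' : Ordinal), α' ∈ E →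
      (∀ n, a f hf n ≤ α') → (∀ n, a g hg n ≤ α') → (∀ β < α', f β = g β) →
      ∃ α'', α'' ∈ E ∧ α' < α'' ∧ ∀ β < α'', f β = g β := by
    intro f hf g hg α' hα'E haf hag hfg
    have hα'κ : α' < κ.ord := hEclub.1 hα'E
    have hsetne : ∀ n : ℕ, ∃ β, β ∈ {β | α' < β ∧ ∀ k < n, β ∈ E' k} ∧ β < κ.ord := by
      intro n
      obtain ⟨β, hβE, hβ⟩ := hEclub.2.2 (α' + 1) (succ_lt' hreg hα'κ)
      exact ⟨β, ⟨lt_of_lt_of_le (lt_add_one α') hβ,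
        fun k _ => Set.mem_iInter.1 hβE k⟩, hEclub.1 hβE⟩
    set b : ℕ → Ordinal := fun n => sInf {β | α' < β ∧ ∀ k < n, β ∈ E' k} with hb
    have hbmem : ∀ n, b n ∈ {β | α' < β ∧ ∀ k < n, β ∈ E' k} :=
      fun n => csInf_mem ⟨_, (hsetne n).choose_spec.1⟩
    have hblt : ∀ n, b n < κ.ord := fun n =>
      lt_of_le_of_lt (csInf_le (OrderBot.bddBelow _) (hsetne n).choose_spec.1)
        (hsetne n).choose_spec.2
    have hbmono : Monotone b := by
      intro m n hmn
      apply csInf_le_csInf (OrderBot.bddBelow _) ⟨_, hbmem n⟩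
      rintro x ⟨h1, h2⟩
      exact ⟨h1, fun k hk => h2 k (lt_of_lt_of_le hk hmn)⟩
    have hfgb : ∀ n, ∀ β < b n, f β = g β := by
      intro n
      have h1 := hr f hf n α' (Set.mem_iInter.1 hα'E n) (haf n)
      have h2 := hr g hg n α' (Set.mem_iInter.1 hα'E n) (hag n)
      rw [← restr_eq_of hfg, h1] at h2
      exact eq_of_restr_eq (Option.some_injective _ h2)
    set α'' := ⨆ n, b n with hα''
    have hlt : α' < α'' := lt_of_lt_of_le (hbmem 0).1 (le_ciSup (Ordinal.bddAbove_range _) 0)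
    have hcap : α'' < κ.ord := csup_lt hreg hunc b hblt
    have hmemE : α'' ∈ E := by
      rw [hEdef]
      rw [Set.mem_iInter]
      intro k
      have hsub : (Set.range fun m => b (k + 1 + m)) ⊆ E' k := by
        rintro x ⟨m, rfl⟩
        exact (hbmem (k + 1 + m)).2 k (by omega)
      have hsup : sSup (Set.range fun m => b (k + 1 + m)) = α'' := by
        apply le_antisymm
        · apply csSup_le (Set.range_nonempty _)
          rintro x ⟨m, rfl⟩
          exact le_ciSup (Ordinal.bddAbove_range b) _
        · apply ciSup_le
          intro n
          exact le_trans (hbmono (show n ≤ k + 1 + n by omega))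
            (le_csSup (Ordinal.bddAbove_range _) ⟨n, rfl⟩)
      have := (hclubs k).2.1 _ hsub (Set.range_nonempty _) (by rw [hsup]; exact hcap)
      rwa [hsup] at this
    refine ⟨α'', hmemE, hlt, ?_⟩
    intro β hβ
    obtain ⟨n, hn⟩ := (lt_ciSup_iff (Ordinal.bddAbove_range b)).1 hβ
    exact hfgb n β hn
  -- propagation to all of κ.ord
  have main : ∀ f (hf : f ∈ F) g (hg : g ∈ F) (α : Ordinal), α ∈ E →
      (∀ n, a f hf n ≤ α) → (∀ n, a g hg n ≤ α) → (∀ β < α, f β = g β) →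
      ∀ β < κ.ord, f β = g β := by
    intro f hf g hg α hαE haf hag hfg
    set T := {x | x ∈ E ∧ α ≤ x ∧ ∀ β < x, f β = g β} with hT
    have hTmem : α ∈ T := ⟨hαE, le_rfl, hfg⟩
    have hTne : T.Nonempty := ⟨α, hTmem⟩
    have hTbdd : BddAbove T := ⟨κ.ord, fun x hx => le_of_lt (hEclub.1 hx.1)⟩
    have hTle : sSup T ≤ κ.ord := csSup_le hTne (fun x hx => le_of_lt (hEclub.1 hx.1))
    have hTeq : sSup T = κ.ord := by
      by_contra hne
      have hlt : sSup T < κ.ord := lt_of_le_of_ne hTle hne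
      have hδE : sSup T ∈ E := hEclub.2.1 T (fun x hx => hx.1) hTne hlt
      have hαδ : α ≤ sSup T := le_csSup hTbdd hTmem
      have hδfg : ∀ β < sSup T, f β = g β := by
        intro β hβ
        obtain ⟨x, hxT, hβx⟩ := exists_lt_of_lt_csSup hTne hβ
        exact hxT.2.2 β hβx
      obtain ⟨α'', hE'', hlt'', hfg''⟩ := step f hf g hg (sSup T) hδE
        (fun n => (haf n).trans hαδ) (fun n => (hag n).trans hαδ) hδfg
      exact absurd (le_csSup hTbdd ⟨hE'', hαδ.trans (le_of_lt hlt''), hfg''⟩)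
        (not_le.2 hlt'')
    intro β hβ
    rw [← hTeq] at hβ
    obtain ⟨x, hxT, hβx⟩ := exists_lt_of_lt_csSup hTne hβ
    exact hxT.2.2 β hβx
  -- counting
  set A : ↥F → Ordinal := fun x => ⨆ n, a x.1 x.2 n with hA
  have hAlt : ∀ x, A x < κ.ord := fun x => csup_lt hreg hunc _ (fun n => ha x.1 x.2 n)
  set m : ↥F → ↥(Set.Iio κ.ord) := fun x => ⟨A x, hAlt x⟩ with hm
  have hcardF : #(↥F) = Order.succ (Cardinal.lift.{1,0} κ) := by
    rw [hF, Cardinal.lift_succ]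
  have hIio : #(↥(Set.Iio κ.ord)) = Cardinal.lift.{1,0} κ := by
    rw [Ordinal.mk_Iio_ordinal, Cardinal.card_ord]
  have hreg' : (Order.succ (Cardinal.lift.{1,0} κ)).IsRegular :=
    Cardinal.isRegular_succ (Cardinal.aleph0_le_lift.2 hreg.aleph0_le)
  obtain ⟨bstar, hfib⟩ := Cardinal.infinite_pigeonhole_card m
    (Order.succ (Cardinal.lift.{1,0} κ)) (le_of_eq hcardF.symm)
    ((Cardinal.aleph0_le_lift.2 hreg.aleph0_le).trans (Order.le_succ _))
    (by rw [hIio, hreg'.cof_eq]; exact Order.lt_succ _)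
  obtain ⟨α, hαE, hbα⟩ := hEclub.2.2 bstar.1 bstar.2
  have hακ : α < κ.ord := hEclub.1 hαE
  set φ : ↥(m ⁻¹' {bstar}) → (↥(Set.Iio α) → ↥(Set.Iio κ.ord)) :=
    fun x y => ⟨x.1.1 y.1, hFrange _ x.1.2 y.1 (y.2.trans hακ)⟩ with hφ
  have hφni : ¬ Function.Injective φ := by
    intro hinj
    have h1 : #(↥(m ⁻¹' {bstar})) ≤ #(↥(Set.Iio α) → ↥(Set.Iio κ.ord)) :=
      Cardinal.mk_le_of_injective hinj
    have h2 : #(↥(Set.Iio α) → ↥(Set.Iio κ.ord)) ≤ Cardinal.lift.{1,0} κ := by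
      rw [← Cardinal.power_def, hIio, Ordinal.mk_Iio_ordinal, ← Cardinal.lift_power]
      apply Cardinal.lift_le.2
      calc κ ^ α.card ≤ κ ^< κ := Cardinal.le_powerlt κ (Cardinal.lt_ord.1 hακ)
        _ = κ := hpow
    exact absurd (hfib.trans (h1.trans h2)) (not_le.2 (Order.lt_succ _))
  obtain ⟨x, y, hφeq, hxy⟩ := Function.not_injective_iff.1 hφni
  have hfneq : x.1.1 ≠ y.1.1 := fun hc => hxy (Subtype.ext (Subtype.ext hc))
  have hfg : ∀ β < α, x.1.1 β = y.1.1 β := by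
    intro β hβ
    have := congrFun hφeq ⟨β, hβ⟩
    simpa [hφ] using congrArg Subtype.val this
  have hAx : A x.1 = bstar.1 := congrArg Subtype.val x.2
  have hAy : A y.1 = bstar.1 := congrArg Subtype.val y.2
  have hax : ∀ n, a x.1.1 x.1.2 n ≤ α := fun n =>
    le_trans (le_trans (le_ciSup (Ordinal.bddAbove_range _) n) (le_of_eq hAx)) hbα
  have hay : ∀ n, a y.1.1 y.1.2 n ≤ α := fun n =>
    le_trans (le_trans (le_ciSup (Ordinal.bddAbove_range _) n) (le_of_eq hAy)) hbα
  obtain ⟨β, hβκ, hβne⟩ := hFsep _ x.1.2 _ y.1.2 hfneq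
  exact hβne (main x.1.1 x.1.2 y.1.1 y.1.2 α hαE hax hay hfg β hβκ)

/-- (1) A system of clubs Eⁿ and partial functions hₙ uniformizing the derived
colorings Hⁿ_f(α) = f↾min(⋂_{k<n} Eᵏ \ (α+1)) is impossible when |F| = κ⁺;
hence (2) the club uniformization statement for F-colorings fails. -/
theorem stmt13 (κ : Cardinal) (hreg : κ.IsRegular) (hunc : ℵ₀ < κ)
    (hpow : κ ^< κ = κ)
    (F : Set (Ordinal → Ordinal))
    (hF : #F = Cardinal.lift.{1,0} (Order.succ κ))
    (hFrange : ∀ f ∈ F, ∀ β < κ.ord, f β < κ.ord)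
    (hFsep : ∀ f ∈ F, ∀ g ∈ F, f ≠ g → ∃ β < κ.ord, f β ≠ g β) :
    (∀ E' : ℕ → Set Ordinal, (∀ n, IsClubOrd κ.ord (E' n)) →
      ∀ h : ℕ → OSeq → Option OSeq,
      (∀ f ∈ F, ∀ n : ℕ, ∃ a < κ.ord, ∀ α ∈ E' n, a ≤ α →
        h n (restr f α) = some (restr f (sInf {β | α < β ∧ ∀ k < n, β ∈ E' k}))) →
      False) ∧
    ¬ (∀ H : (Ordinal → Ordinal) → Ordinal → OSeq,
        (∀ f ∈ F, ∀ α < κ.ord, IsSeq κ (H f α)) →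
        ∃ E : Set Ordinal, IsClubOrd κ.ord E ∧
          ∃ h : OSeq → OSeq, ∀ f ∈ F, ∃ a < κ.ord, ∀ α ∈ E, a ≤ α →
            h (restr f α) = H f α) := by
  classical
  have part1 := part1_aux κ hreg hunc hpow F hF hFrange hFsep
  refine ⟨fun E' hc h hyp => part1 E' hc h hyp, ?_⟩
  intro huni
  have hord0 : (0 : Ordinal) < κ.ord := by
    rw [Cardinal.lt_ord, Ordinal.card_zero]
    exact aleph0_pos.trans_le hreg.aleph0_le
  -- the colorings, with a guard making them total
  set Hn : ℕ → (ℕ → Set Ordinal) → (Ordinal → Ordinal) → Ordinal → OSeq :=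
    fun n P f α =>
      restr f (if sInf {β | α < β ∧ ∀ k < n, β ∈ P k} < κ.ord
        then sInf {β | α < β ∧ ∀ k < n, β ∈ P k} else 0) with hHn
  have hHseq : ∀ n P, ∀ f ∈ F, ∀ α < κ.ord, IsSeq κ (Hn n P f α) := by
    intro n P f hf α hα
    set γ := if sInf {β | α < β ∧ ∀ k < n, β ∈ P k} < κ.ord
        then sInf {β | α < β ∧ ∀ k < n, β ∈ P k} else 0 with hγdef
    have hγ : γ < κ.ord := by
      rw [hγdef]
      split_ifs with hif
      · exact hif
      · exact hord0
    refine ⟨hγ, ?_, ?_⟩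
    · intro β hβ
      have hβγ : β < γ := hβ
      show (if β < γ then f β else 0) < κ.ord
      rw [if_pos hβγ]
      exact hFrange f hf β (hβγ.trans hγ)
    · intro β hβ
      have hβγ : ¬ β < γ := hβ
      show (if β < γ then f β else 0) = 0
      rw [if_neg hβγ]
  have pickEx : ∀ n P, ∃ Eh : Set Ordinal × (OSeq → OSeq), IsClubOrd κ.ord Eh.1 ∧
      ∀ f ∈ F, ∃ a < κ.ord, ∀ α ∈ Eh.1, a ≤ α → Eh.2 (restr f α) = Hn n P f α := by
    intro n P
    obtain ⟨E, hE, h, hh⟩ := huni (Hn n P) (hHseq n P)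
    exact ⟨(E, h), hE, hh⟩
  choose pick hpickClub hpickUnif using pickEx
  set g : ℕ → ℕ → Set Ordinal × (OSeq → OSeq) := buildSeq pick with hgdef
  set E'' : ℕ → Set Ordinal := fun n => (g (n + 1) n).1 with hE''
  have hgPn : ∀ n, g (n + 1) n = pick n (fun j => (g n j).1) := by
    intro n
    show (if n = n then pick n (fun j => (buildSeq pick n j).1) else buildSeq pick n n)
        = pick n (fun j => (buildSeq pick n j).1)
    rw [if_pos rfl]
  have hclubs : ∀ n, IsClubOrd κ.ord (E'' n) := by
    intro n
    show IsClubOrd κ.ord (g (n + 1) n).1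
    rw [hgPn n]
    exact hpickClub n _
  apply part1 E'' hclubs (fun n s => some ((g (n + 1) n).2 s))
  intro f hf n
  obtain ⟨aa, haa, hspec⟩ := hpickUnif n (fun j => (g n j).1) f hf
  refine ⟨aa, haa, ?_⟩
  intro α hαE hle
  have hα : α < κ.ord := (hclubs n).1 hαE
  have hsame : {β | α < β ∧ ∀ k < n, β ∈ (g n k).1} = {β | α < β ∧ ∀ k < n, β ∈ E'' k} := by
    ext β
    simp only [Set.mem_setOf_eq]
    constructor
    · rintro ⟨h1, h2⟩
      refine ⟨h1, fun k hk => ?_⟩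
      have := h2 k hk
      rw [hgdef, buildSeq_stab pick n k hk] at this
      exact this
    · rintro ⟨h1, h2⟩
      refine ⟨h1, fun k hk => ?_⟩
      rw [hgdef, buildSeq_stab pick n k hk]
      exact h2 k hk
  have hguard : sInf {β | α < β ∧ ∀ k < n, β ∈ E'' k} < κ.ord := by
    set Ep : ℕ → Set Ordinal := fun k => if k < n then E'' k else Set.Iio κ.ord with hEp
    have hEpclub : ∀ k, IsClubOrd κ.ord (Ep k) := by
      intro k
      by_cases hk : k < n
      · show IsClubOrd κ.ord (if k < n then E'' k else Set.Iio κ.ord)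
        rw [if_pos hk]; exact hclubs k
      · show IsClubOrd κ.ord (if k < n then E'' k else Set.Iio κ.ord)
        rw [if_neg hk]
        exact ⟨subset_rfl, fun S _ _ hlt => hlt, fun a ha => ⟨a, ha, le_rfl⟩⟩
    obtain ⟨β, hβ, hαβ⟩ := (isClub_iInter hreg hunc Ep hEpclub).2.2 (α + 1) (succ_lt' hreg hα)
    have hβκ : β < κ.ord := by
      have := Set.mem_iInter.1 hβ n
      rw [show Ep n = Set.Iio κ.ord by rw [hEp]; simp] at this
      exact this
    have hβmem : β ∈ {β | α < β ∧ ∀ k < n, β ∈ E'' k} := by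
      refine ⟨lt_of_lt_of_le (lt_add_one α) hαβ, fun k hk => ?_⟩
      have := Set.mem_iInter.1 hβ k
      rw [show Ep k = E'' k by rw [hEp]; simp [hk]] at this
      exact this
    exact lt_of_le_of_lt (csInf_le (OrderBot.bddBelow _) hβmem) hβκ
  have hαE' : α ∈ (pick n (fun j => (g n j).1)).1 := by
    rw [← hgPn n]; exact hαE
  show some ((g (n + 1) n).2 (restr f α)) = _
  rw [hgPn n, hspec α hαE' hle, hHn]
  simp only
  rw [hsame, if_pos hguard]
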